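/- Let {R,F} be a compatible pair of R-matrices on V⊗V, V = ℂ^N, let A be an associative unital ℂ-algebra, let η ∈ ℂ∖{0}, and let L, M ∈ Mat_N(A) satisfy: (i) R₁ M_{1̄} M_{2̄} = M_{1̄} M_{2̄} R₁; (ii) R₁L₁R₁L₁ = L₁R₁L₁R₁; (iii) R₁L₁R₁M₁ = η·M₁L_{2̄}, where the copies are X_{1̄} = X₁ and X_{k+1‾} = F_k X_{k̄} F_k⁻¹. Then for every p ≥ 1 the following identity holds in Mat_{N^{p+1}}(A): L₁ · R_{1→p} · M_{1̄} M_{2̄} ⋯ M_{p̄} = η^p · R⁻¹_{1→p} · M_{1̄} M_{2̄} ⋯ M_{p̄} · L_{p+1‾}, where R_{1→p} = R₁R₂⋯R_p and R⁻¹_{1→p} = R₁⁻¹R₂⁻¹⋯R_p⁻¹. -/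

import Mathlib

open Matrix BigOperators

/-- `X₁ = X ⊗ id` acting on the factors 1,2 of `(ℂ^N)^{⊗3}`. -/
noncomputable def up12 {N : ℕ} (X : Matrix (Fin N × Fin N) (Fin N × Fin N) ℂ) :
    Matrix (Fin N × Fin N × Fin N) (Fin N × Fin N × Fin N) ℂ :=
  Matrix.of fun p q => X (p.1, p.2.1) (q.1, q.2.1) * (if p.2.2 = q.2.2 then 1 else 0)

/-- `X₂ = id ⊗ X` acting on the factors 2,3 of `(ℂ^N)^{⊗3}`. -/
noncomputable def up23 {N : ℕ} (X : Matrix (Fin N × Fin N) (Fin N × Fin N) ℂ) :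
    Matrix (Fin N × Fin N × Fin N) (Fin N × Fin N × Fin N) ℂ :=
  Matrix.of fun p q => (if p.1 = q.1 then 1 else 0) * X (p.2.1, p.2.2) (q.2.1, q.2.2)

/-- `X₁ = X ⊗ I_N` on two tensor factors, for a matrix over an algebra `A`. -/
def lift1 {N : ℕ} {A : Type} [Ring A] (X : Matrix (Fin N) (Fin N) A) :
    Matrix (Fin N × Fin N) (Fin N × Fin N) A :=
  Matrix.of fun p q => X p.1 q.1 * (if p.2 = q.2 then 1 else 0)

/-- A matrix `X ∈ Mat_N(A)` placed in the (0-indexed) tensor factor `p`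
of `V^{⊗k}`, acting as the identity elsewhere. -/
def liftV {N : ℕ} {A : Type} [Ring A] (k : ℕ) (X : Matrix (Fin N) (Fin N) A)
    (p : ℕ) : Matrix (Fin k → Fin N) (Fin k → Fin N) A :=
  Matrix.of fun v w =>
    if h : p < k then
      X (v ⟨p, h⟩) (w ⟨p, h⟩) *
        (if ∀ j : Fin k, (j : ℕ) ≠ p → v j = w j then 1 else 0)
    else (if v = w then 1 else 0)

/-- A matrix `X ∈ Mat_{N²}(A)` placed in the (0-indexed) tensor factors
`p, p+1` of `V^{⊗k}`; this is the operator `X_{p+1}` in 1-indexed notation. -/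
def lift2 {N : ℕ} {A : Type} [Ring A] (k : ℕ)
    (X : Matrix (Fin N × Fin N) (Fin N × Fin N) A) (p : ℕ) :
    Matrix (Fin k → Fin N) (Fin k → Fin N) A :=
  Matrix.of fun v w =>
    if h : p + 1 < k then
      X (v ⟨p, Nat.lt_of_succ_lt h⟩, v ⟨p + 1, h⟩)
          (w ⟨p, Nat.lt_of_succ_lt h⟩, w ⟨p + 1, h⟩) *
        (if ∀ j : Fin k, (j : ℕ) ≠ p → (j : ℕ) ≠ p + 1 → v j = w j then 1 else 0)
    else (if v = w then 1 else 0)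

/-- The `F`-copies of a matrix `X` in `Mat_{N^k}(A)`:
`X_{1̄} = X₁` and `X_{n+2‾} = F_{n+1} X_{n+1‾} F_{n+1}⁻¹`. -/
def copies {N : ℕ} {A : Type} [Ring A] (k : ℕ)
    (FA FinvA : Matrix (Fin N × Fin N) (Fin N × Fin N) A)
    (X : Matrix (Fin N) (Fin N) A) :
    ℕ → Matrix (Fin k → Fin N) (Fin k → Fin N) A
  | 0 => liftV k X 0
  | n + 1 => lift2 k FA n * copies k FA FinvA X n * lift2 k FinvA n

/-- The ordered product of copies `X_{1̄} X_{2̄} ⋯ X_{n+1‾}`. -/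
def copiesProd {N : ℕ} {A : Type} [Ring A] (k : ℕ)
    (FA FinvA : Matrix (Fin N × Fin N) (Fin N × Fin N) A)
    (X : Matrix (Fin N) (Fin N) A) :
    ℕ → Matrix (Fin k → Fin N) (Fin k → Fin N) A
  | 0 => copies k FA FinvA X 0
  | n + 1 => copiesProd k FA FinvA X n * copies k FA FinvA X (n + 1)

/-- The ascending product `R_{1→(n+1)} = R₁R₂⋯R_{n+1}` in `Mat_{N^k}(A)`. -/
def RupProd {N : ℕ} {A : Type} [Ring A] (k : ℕ)
    (RA : Matrix (Fin N × Fin N) (Fin N × Fin N) A) :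
    ℕ → Matrix (Fin k → Fin N) (Fin k → Fin N) A
  | 0 => lift2 k RA 0
  | n + 1 => RupProd k RA n * lift2 k RA (n + 1)


section core
variable {N k : ℕ} {A : Type} [Ring A] {p : ℕ}

lemma lift2_of_ge (h : ¬ p + 1 < k) (X : Matrix (Fin N × Fin N) (Fin N × Fin N) A) :
    lift2 k X p = 1 := by
  ext v w
  simp only [lift2, Matrix.of_apply, dif_neg h, Matrix.one_apply]

lemma lift2_one (p : ℕ) :
    lift2 k (1 : Matrix (Fin N × Fin N) (Fin N × Fin N) A) p = 1 := by
  by_cases h : p + 1 < k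
  · ext v w
    simp only [lift2, Matrix.of_apply, dif_pos h, Matrix.one_apply]
    by_cases hvw : v = w
    · subst hvw; simp
    · rw [if_neg hvw]
      by_cases h1 : (v ⟨p, Nat.lt_of_succ_lt h⟩, v ⟨p+1, h⟩)
          = (w ⟨p, Nat.lt_of_succ_lt h⟩, w ⟨p+1, h⟩)
      · by_cases h2 : ∀ j : Fin k, (j:ℕ) ≠ p → (j:ℕ) ≠ p+1 → v j = w j
        · exfalso
          apply hvw; funext j
          by_cases hj0 : (j:ℕ) = p
          · have : j = (⟨p, Nat.lt_of_succ_lt h⟩ : Fin k) := Fin.ext hj0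
            rw [this]; exact (Prod.mk.injEq _ _ _ _).mp h1 |>.1
          · by_cases hj1 : (j:ℕ) = p+1
            · have : j = (⟨p+1, h⟩ : Fin k) := Fin.ext hj1
              rw [this]; exact (Prod.mk.injEq _ _ _ _).mp h1 |>.2
            · exact h2 j hj0 hj1
        · simp [h2]
      · simp [h1]
  · rw [lift2_of_ge h]

lemma lift2_smul (h : p + 1 < k) (a : A) (X : Matrix (Fin N × Fin N) (Fin N × Fin N) A) :
    lift2 k (a • X) p = a • lift2 k X p := by
  ext v w
  simp only [lift2, Matrix.of_apply, dif_pos h, Matrix.smul_apply, smul_eq_mul, mul_assoc]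

lemma lift2_lift1 (h : p + 1 < k) (X : Matrix (Fin N) (Fin N) A) :
    lift2 k (lift1 X) p = liftV k X p := by
  have hp : p < k := Nat.lt_of_succ_lt h
  ext v w
  simp only [lift2, lift1, liftV, Matrix.of_apply, dif_pos h, dif_pos hp, mul_assoc]
  congr 1
  rw [ite_mul, one_mul, zero_mul]
  by_cases h1 : v ⟨p+1, h⟩ = w ⟨p+1, h⟩
  · rw [if_pos h1]
    congr 1
    apply propext; constructor
    · intro h2 j hj0
      by_cases hj1 : (j:ℕ) = p+1
      · have : j = (⟨p+1, h⟩ : Fin k) := Fin.ext hj1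
        rw [this]; exact h1
      · exact h2 j hj0 hj1
    · intro h2 j hj0 _; exact h2 j hj0
  · rw [if_neg h1]
    rw [if_neg]
    intro h2
    exact h1 (h2 ⟨p+1, h⟩ (by simp) )
end core

section core
variable {N k : ℕ} {A : Type} [Ring A] {p : ℕ}

lemma lift2_mul (h : p + 1 < k) (X Y : Matrix (Fin N × Fin N) (Fin N × Fin N) A) :
    lift2 k X p * lift2 k Y p = lift2 k (X * Y) p := by
  have hp : p < k := Nat.lt_of_succ_lt h
  set P0 : Fin k := ⟨p, hp⟩ with hP0
  set P1 : Fin k := ⟨p+1, h⟩ with hP1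
  have hPne : P0 ≠ P1 := by simp [hP0, hP1, Fin.ext_iff]
  ext v u
  rw [Matrix.mul_apply]
  simp only [lift2, Matrix.of_apply, dif_pos h, Matrix.mul_apply]
  have key : ∀ w : Fin k → Fin N,
      (X (v P0, v P1) (w P0, w P1) *
        (if ∀ j : Fin k, (j:ℕ) ≠ p → (j:ℕ) ≠ p+1 → v j = w j then (1:A) else 0)) *
      (Y (w P0, w P1) (u P0, u P1) *
        (if ∀ j : Fin k, (j:ℕ) ≠ p → (j:ℕ) ≠ p+1 → w j = u j then (1:A) else 0))
      = ∑ a : Fin N, ∑ b : Fin N,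
          if w P0 = a ∧ w P1 = b then
      (X (v P0, v P1) (w P0, w P1) *
        (if ∀ j : Fin k, (j:ℕ) ≠ p → (j:ℕ) ≠ p+1 → v j = w j then (1:A) else 0)) *
      (Y (w P0, w P1) (u P0, u P1) *
        (if ∀ j : Fin k, (j:ℕ) ≠ p → (j:ℕ) ≠ p+1 → w j = u j then (1:A) else 0))
          else 0 := by
    intro w
    simp [ite_and, Finset.sum_ite_eq]
  rw [Finset.sum_congr rfl (fun w _ => key w)]
  rw [Finset.sum_comm]
  rw [Finset.sum_congr rfl (fun a _ => Finset.sum_comm)]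
  have inner : ∀ a b : Fin N,
      (∑ w : Fin k → Fin N,
        if w P0 = a ∧ w P1 = b then
          (X (v P0, v P1) (w P0, w P1) *
            (if ∀ j : Fin k, (j:ℕ) ≠ p → (j:ℕ) ≠ p+1 → v j = w j then (1:A) else 0)) *
          (Y (w P0, w P1) (u P0, u P1) *
            (if ∀ j : Fin k, (j:ℕ) ≠ p → (j:ℕ) ≠ p+1 → w j = u j then (1:A) else 0))
        else 0)
      = X (v P0, v P1) (a, b) *
          (Y (a, b) (u P0, u P1) *
            (if ∀ j : Fin k, (j:ℕ) ≠ p → (j:ℕ) ≠ p+1 → v j = u j then (1:A) else 0)) := by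
    intro a b
    set w₀ : Fin k → Fin N := Function.update (Function.update v P0 a) P1 b with hw₀
    have hw₀P0 : w₀ P0 = a := by
      rw [hw₀, Function.update_of_ne hPne, Function.update_self]
    have hw₀P1 : w₀ P1 = b := by rw [hw₀, Function.update_self]
    have hw₀off : ∀ j : Fin k, (j:ℕ) ≠ p → (j:ℕ) ≠ p+1 → w₀ j = v j := by
      intro j hj0 hj1
      have hj0' : j ≠ P0 := by simp [hP0, Fin.ext_iff]; exact hj0
      have hj1' : j ≠ P1 := by simp [hP1, Fin.ext_iff]; exact hj1
      rw [hw₀, Function.update_of_ne hj1', Function.update_of_ne hj0']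
    rw [Finset.sum_eq_single w₀]
    · have hiff : (∀ j : Fin k, (j:ℕ) ≠ p → (j:ℕ) ≠ p+1 → w₀ j = u j)
          ↔ (∀ j : Fin k, (j:ℕ) ≠ p → (j:ℕ) ≠ p+1 → v j = u j) := by
        constructor
        · intro h2 j hj0 hj1; rw [← hw₀off j hj0 hj1]; exact h2 j hj0 hj1
        · intro h2 j hj0 hj1; rw [hw₀off j hj0 hj1]; exact h2 j hj0 hj1
      rw [if_pos ⟨hw₀P0, hw₀P1⟩, hw₀P0, hw₀P1,
        if_pos (fun j hj0 hj1 => (hw₀off j hj0 hj1).symm), mul_one,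
        if_congr hiff rfl rfl]
    · intro w _ hwne
      by_cases hc : w P0 = a ∧ w P1 = b
      · rw [if_pos hc]
        by_cases hagr : ∀ j : Fin k, (j:ℕ) ≠ p → (j:ℕ) ≠ p+1 → v j = w j
        · exfalso
          apply hwne
          funext j
          by_cases hj0 : (j:ℕ) = p
          · have hjP : j = P0 := Fin.ext hj0
            rw [hjP, hw₀P0]; exact hc.1
          · by_cases hj1 : (j:ℕ) = p+1
            · have hjP : j = P1 := Fin.ext hj1
              rw [hjP, hw₀P1]; exact hc.2
            · rw [← hagr j hj0 hj1, hw₀off j hj0 hj1]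
        · rw [if_neg hagr]
          simp
      · rw [if_neg hc]
    · intro hw; exact absurd (Finset.mem_univ w₀) hw
  rw [Finset.sum_congr rfl (fun a _ => Finset.sum_congr rfl (fun b _ => inner a b))]
  rw [Finset.sum_mul, Fintype.sum_prod_type]
  exact Finset.sum_congr rfl (fun a _ =>
    Finset.sum_congr rfl (fun b _ => (mul_assoc _ _ _).symm))
end core

section core3
variable {N k : ℕ} {A : Type} [Ring A] {p : ℕ}

def u12A {N : ℕ} {A : Type} [Ring A] (X : Matrix (Fin N × Fin N) (Fin N × Fin N) A) :
    Matrix (Fin N × Fin N × Fin N) (Fin N × Fin N × Fin N) A :=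
  Matrix.of fun p q => X (p.1, p.2.1) (q.1, q.2.1) * (if p.2.2 = q.2.2 then 1 else 0)

def u23A {N : ℕ} {A : Type} [Ring A] (X : Matrix (Fin N × Fin N) (Fin N × Fin N) A) :
    Matrix (Fin N × Fin N × Fin N) (Fin N × Fin N × Fin N) A :=
  Matrix.of fun p q => (if p.1 = q.1 then 1 else 0) * X (p.2.1, p.2.2) (q.2.1, q.2.2)

def lift3 {N : ℕ} {A : Type} [Ring A] (k : ℕ)
    (Z : Matrix (Fin N × Fin N × Fin N) (Fin N × Fin N × Fin N) A) (p : ℕ) :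
    Matrix (Fin k → Fin N) (Fin k → Fin N) A :=
  Matrix.of fun v w =>
    if h : p + 2 < k then
      Z (v ⟨p, by omega⟩, v ⟨p + 1, by omega⟩, v ⟨p + 2, h⟩)
          (w ⟨p, by omega⟩, w ⟨p + 1, by omega⟩, w ⟨p + 2, h⟩) *
        (if ∀ j : Fin k, (j : ℕ) ≠ p → (j : ℕ) ≠ p + 1 → (j : ℕ) ≠ p + 2 → v j = w j
          then 1 else 0)
    else (if v = w then 1 else 0)

lemma lift3_mul (h : p + 2 < k)
    (X Y : Matrix (Fin N × Fin N × Fin N) (Fin N × Fin N × Fin N) A) :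
    lift3 k X p * lift3 k Y p = lift3 k (X * Y) p := by
  have hp0 : p < k := by omega
  have hp1 : p + 1 < k := by omega
  set P0 : Fin k := ⟨p, hp0⟩ with hP0
  set P1 : Fin k := ⟨p+1, hp1⟩ with hP1
  set P2 : Fin k := ⟨p+2, h⟩ with hP2
  have h01 : P0 ≠ P1 := by simp [hP0, hP1, Fin.ext_iff]
  have h02 : P0 ≠ P2 := by simp [hP0, hP2, Fin.ext_iff]
  have h12 : P1 ≠ P2 := by simp [hP1, hP2, Fin.ext_iff]
  ext v u
  rw [Matrix.mul_apply]
  simp only [lift3, Matrix.of_apply, dif_pos h, Matrix.mul_apply]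
  have key : ∀ w : Fin k → Fin N,
      (X (v P0, v P1, v P2) (w P0, w P1, w P2) *
        (if ∀ j : Fin k, (j:ℕ) ≠ p → (j:ℕ) ≠ p+1 → (j:ℕ) ≠ p+2 → v j = w j then (1:A) else 0)) *
      (Y (w P0, w P1, w P2) (u P0, u P1, u P2) *
        (if ∀ j : Fin k, (j:ℕ) ≠ p → (j:ℕ) ≠ p+1 → (j:ℕ) ≠ p+2 → w j = u j then (1:A) else 0))
      = ∑ a : Fin N, ∑ b : Fin N, ∑ c : Fin N,
          if w P0 = a ∧ w P1 = b ∧ w P2 = c then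
      (X (v P0, v P1, v P2) (w P0, w P1, w P2) *
        (if ∀ j : Fin k, (j:ℕ) ≠ p → (j:ℕ) ≠ p+1 → (j:ℕ) ≠ p+2 → v j = w j then (1:A) else 0)) *
      (Y (w P0, w P1, w P2) (u P0, u P1, u P2) *
        (if ∀ j : Fin k, (j:ℕ) ≠ p → (j:ℕ) ≠ p+1 → (j:ℕ) ≠ p+2 → w j = u j then (1:A) else 0))
          else 0 := by
    intro w
    simp [ite_and, Finset.sum_ite_eq]
  rw [Finset.sum_congr rfl (fun w _ => key w)]
  rw [Finset.sum_comm]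
  rw [Finset.sum_congr rfl (fun a _ => Finset.sum_comm)]
  rw [Finset.sum_congr rfl (fun a _ => Finset.sum_congr rfl (fun b _ => Finset.sum_comm))]
  have inner : ∀ a b c : Fin N,
      (∑ w : Fin k → Fin N,
        if w P0 = a ∧ w P1 = b ∧ w P2 = c then
          (X (v P0, v P1, v P2) (w P0, w P1, w P2) *
            (if ∀ j : Fin k, (j:ℕ) ≠ p → (j:ℕ) ≠ p+1 → (j:ℕ) ≠ p+2 → v j = w j then (1:A) else 0)) *
          (Y (w P0, w P1, w P2) (u P0, u P1, u P2) *
            (if ∀ j : Fin k, (j:ℕ) ≠ p → (j:ℕ) ≠ p+1 → (j:ℕ) ≠ p+2 → w j = u j then (1:A) else 0))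
        else 0)
      = X (v P0, v P1, v P2) (a, b, c) *
          (Y (a, b, c) (u P0, u P1, u P2) *
            (if ∀ j : Fin k, (j:ℕ) ≠ p → (j:ℕ) ≠ p+1 → (j:ℕ) ≠ p+2 → v j = u j then (1:A) else 0)) := by
    intro a b c
    set w₀ : Fin k → Fin N :=
      Function.update (Function.update (Function.update v P0 a) P1 b) P2 c with hw₀
    have hw₀P0 : w₀ P0 = a := by
      rw [hw₀, Function.update_of_ne h02, Function.update_of_ne h01, Function.update_self]
    have hw₀P1 : w₀ P1 = b := by
      rw [hw₀, Function.update_of_ne h12, Function.update_self]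
    have hw₀P2 : w₀ P2 = c := by rw [hw₀, Function.update_self]
    have hw₀off : ∀ j : Fin k, (j:ℕ) ≠ p → (j:ℕ) ≠ p+1 → (j:ℕ) ≠ p+2 → w₀ j = v j := by
      intro j hj0 hj1 hj2
      have hj0' : j ≠ P0 := by simp [hP0, Fin.ext_iff]; exact hj0
      have hj1' : j ≠ P1 := by simp [hP1, Fin.ext_iff]; exact hj1
      have hj2' : j ≠ P2 := by simp [hP2, Fin.ext_iff]; exact hj2
      rw [hw₀, Function.update_of_ne hj2', Function.update_of_ne hj1',
        Function.update_of_ne hj0']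
    rw [Finset.sum_eq_single w₀]
    · have hiff : (∀ j : Fin k, (j:ℕ) ≠ p → (j:ℕ) ≠ p+1 → (j:ℕ) ≠ p+2 → w₀ j = u j)
          ↔ (∀ j : Fin k, (j:ℕ) ≠ p → (j:ℕ) ≠ p+1 → (j:ℕ) ≠ p+2 → v j = u j) := by
        constructor
        · intro h2 j hj0 hj1 hj2; rw [← hw₀off j hj0 hj1 hj2]; exact h2 j hj0 hj1 hj2
        · intro h2 j hj0 hj1 hj2; rw [hw₀off j hj0 hj1 hj2]; exact h2 j hj0 hj1 hj2
      rw [if_pos ⟨hw₀P0, hw₀P1, hw₀P2⟩, hw₀P0, hw₀P1, hw₀P2,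
        if_pos (fun j hj0 hj1 hj2 => (hw₀off j hj0 hj1 hj2).symm), mul_one,
        if_congr hiff rfl rfl]
    · intro w _ hwne
      by_cases hc : w P0 = a ∧ w P1 = b ∧ w P2 = c
      · rw [if_pos hc]
        by_cases hagr : ∀ j : Fin k, (j:ℕ) ≠ p → (j:ℕ) ≠ p+1 → (j:ℕ) ≠ p+2 → v j = w j
        · exfalso
          apply hwne
          funext j
          by_cases hj0 : (j:ℕ) = p
          · have hjP : j = P0 := Fin.ext hj0
            rw [hjP, hw₀P0]; exact hc.1
          · by_cases hj1 : (j:ℕ) = p+1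
            · have hjP : j = P1 := Fin.ext hj1
              rw [hjP, hw₀P1]; exact hc.2.1
            · by_cases hj2 : (j:ℕ) = p+2
              · have hjP : j = P2 := Fin.ext hj2
                rw [hjP, hw₀P2]; exact hc.2.2
              · rw [← hagr j hj0 hj1 hj2, hw₀off j hj0 hj1 hj2]
        · rw [if_neg hagr]
          simp
      · rw [if_neg hc]
    · intro hw; exact absurd (Finset.mem_univ w₀) hw
  rw [Finset.sum_congr rfl (fun a _ => Finset.sum_congr rfl
    (fun b _ => Finset.sum_congr rfl (fun c _ => inner a b c)))]
  rw [Finset.sum_mul, Fintype.sum_prod_type]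
  refine Finset.sum_congr rfl (fun a _ => ?_)
  rw [Fintype.sum_prod_type]
  exact Finset.sum_congr rfl (fun b _ =>
    Finset.sum_congr rfl (fun c _ => (mul_assoc _ _ _).symm))

lemma lift3_u12 (h : p + 2 < k) (X : Matrix (Fin N × Fin N) (Fin N × Fin N) A) :
    lift3 k (u12A X) p = lift2 k X p := by
  have hp1 : p + 1 < k := by omega
  ext v w
  simp only [lift3, lift2, u12A, Matrix.of_apply, dif_pos h, dif_pos hp1, mul_assoc]
  congr 1
  rw [ite_mul, one_mul, zero_mul]
  by_cases h2 : v ⟨p+2, h⟩ = w ⟨p+2, h⟩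
  · rw [if_pos h2]
    apply if_congr _ rfl rfl
    constructor
    · intro hA j hj0 hj1
      by_cases hj2 : (j:ℕ) = p+2
      · have : j = (⟨p+2, h⟩ : Fin k) := Fin.ext hj2
        rw [this]; exact h2
      · exact hA j hj0 hj1 hj2
    · intro hA j hj0 hj1 _; exact hA j hj0 hj1
  · rw [if_neg h2, if_neg]
    intro hA
    exact h2 (hA ⟨p+2, h⟩ (by simp) (by simp))

lemma lift3_u23 (h : p + 2 < k) (X : Matrix (Fin N × Fin N) (Fin N × Fin N) A) :
    lift3 k (u23A X) p = lift2 k X (p+1) := by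
  have hp1 : p + 1 + 1 < k := by omega
  ext v w
  simp only [lift3, lift2, u23A, Matrix.of_apply, dif_pos h, dif_pos hp1]
  by_cases hd : ∀ j : Fin k, (j:ℕ) ≠ p+1 → (j:ℕ) ≠ p+1+1 → v j = w j
  · have h0 : v ⟨p, by omega⟩ = w ⟨p, by omega⟩ := hd ⟨p, by omega⟩ (by simp) (by simp; omega)
    have h3 : ∀ j : Fin k, (j:ℕ) ≠ p → (j:ℕ) ≠ p+1 → (j:ℕ) ≠ p+2 → v j = w j :=
      fun j hj0 hj1 hj2 => hd j hj1 (by omega)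
    rw [if_pos hd, if_pos h0, if_pos h3, one_mul, mul_one]
  · rw [if_neg hd]
    by_cases h0 : v ⟨p, by omega⟩ = w ⟨p, by omega⟩
    · by_cases h3 : ∀ j : Fin k, (j:ℕ) ≠ p → (j:ℕ) ≠ p+1 → (j:ℕ) ≠ p+2 → v j = w j
      · exfalso
        apply hd
        intro j hj1 hj2
        by_cases hj0 : (j:ℕ) = p
        · have hjP : j = (⟨p, by omega⟩ : Fin k) := Fin.ext hj0
          rw [hjP]; exact h0
        · exact h3 j hj0 hj1 (by omega)
      · rw [if_neg h3]; simp
    · rw [if_neg h0]; simp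
end core3

section comm
variable {N k : ℕ} {A : Type} [Ring A] {i j q : ℕ}

lemma lift2_of_ge' (h : ¬ j + 1 < k) (X : Matrix (Fin N × Fin N) (Fin N × Fin N) A) :
    lift2 k X j = 1 := by
  ext v w
  simp only [lift2, Matrix.of_apply, dif_neg h, Matrix.one_apply]

lemma lift2_comm (hij : i + 1 < j)
    (X Y : Matrix (Fin N × Fin N) (Fin N × Fin N) A)
    (hcen : ∀ a b c, Commute (Y a b) c) :
    lift2 k X i * lift2 k Y j = lift2 k Y j * lift2 k X i := by
  by_cases hjk : j + 1 < k
  · have hik : i + 1 < k := by omega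
    have hi0 : i < k := by omega
    have hj0 : j < k := by omega
    set I0 : Fin k := ⟨i, hi0⟩ with hI0
    set I1 : Fin k := ⟨i+1, hik⟩ with hI1
    set J0 : Fin k := ⟨j, hj0⟩ with hJ0
    set J1 : Fin k := ⟨j+1, hjk⟩ with hJ1
    ext v u
    rw [Matrix.mul_apply, Matrix.mul_apply]
    simp only [lift2, Matrix.of_apply, dif_pos hik, dif_pos hjk]
    set wL : Fin k → Fin N := fun t => if t = I0 ∨ t = I1 then u t else v t with hwL
    set wR : Fin k → Fin N := fun t => if t = J0 ∨ t = J1 then u t else v t with hwR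
    have eI0 : wL I0 = u I0 := by rw [hwL]; exact if_pos (Or.inl rfl)
    have eI1 : wL I1 = u I1 := by rw [hwL]; exact if_pos (Or.inr rfl)
    have eJ0 : wL J0 = v J0 := by
      rw [hwL]; exact if_neg (by simp [hI0, hI1, hJ0, Fin.ext_iff]; omega)
    have eJ1 : wL J1 = v J1 := by
      rw [hwL]; exact if_neg (by simp [hI0, hI1, hJ1, Fin.ext_iff]; omega)
    have fJ0 : wR J0 = u J0 := by rw [hwR]; exact if_pos (Or.inl rfl)
    have fJ1 : wR J1 = u J1 := by rw [hwR]; exact if_pos (Or.inr rfl)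
    have fI0 : wR I0 = v I0 := by
      rw [hwR]; exact if_neg (by simp [hI0, hJ0, hJ1, Fin.ext_iff]; omega)
    have fI1 : wR I1 = v I1 := by
      rw [hwR]; exact if_neg (by simp [hI1, hJ0, hJ1, Fin.ext_iff]; omega)
    have hLoff : ∀ t : Fin k, (t:ℕ) ≠ i → (t:ℕ) ≠ i+1 → wL t = v t := by
      intro t ht0 ht1
      rw [hwL]
      exact if_neg (by simp [hI0, hI1, Fin.ext_iff]; omega)
    have hRoff : ∀ t : Fin k, (t:ℕ) ≠ j → (t:ℕ) ≠ j+1 → wR t = v t := by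
      intro t ht0 ht1
      rw [hwR]
      exact if_neg (by simp [hJ0, hJ1, Fin.ext_iff]; omega)
    have hL : (∑ w : Fin k → Fin N,
        (X (v I0, v I1) (w I0, w I1) *
          (if ∀ t : Fin k, (t:ℕ) ≠ i → (t:ℕ) ≠ i+1 → v t = w t then (1:A) else 0)) *
        (Y (w J0, w J1) (u J0, u J1) *
          (if ∀ t : Fin k, (t:ℕ) ≠ j → (t:ℕ) ≠ j+1 → w t = u t then (1:A) else 0)))
        = X (v I0, v I1) (u I0, u I1) * (Y (v J0, v J1) (u J0, u J1) *
          (if ∀ t : Fin k, (t:ℕ) ≠ i → (t:ℕ) ≠ i+1 → (t:ℕ) ≠ j → (t:ℕ) ≠ j+1 → v t = u t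
            then (1:A) else 0)) := by
      rw [Finset.sum_eq_single wL]
      · have c1 : ∀ t : Fin k, (t:ℕ) ≠ i → (t:ℕ) ≠ i+1 → v t = wL t :=
          fun t ht0 ht1 => (hLoff t ht0 ht1).symm
        have hiff : (∀ t : Fin k, (t:ℕ) ≠ j → (t:ℕ) ≠ j+1 → wL t = u t)
            ↔ (∀ t : Fin k, (t:ℕ) ≠ i → (t:ℕ) ≠ i+1 → (t:ℕ) ≠ j → (t:ℕ) ≠ j+1 → v t = u t) := by
          constructor
          · intro hc t ht0 ht1 ht2 ht3
            rw [← hLoff t ht0 ht1]; exact hc t ht2 ht3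
          · intro hc t ht2 ht3
            by_cases ht0 : (t:ℕ) = i
            · have : t = I0 := Fin.ext ht0
              rw [this, eI0]
            · by_cases ht1 : (t:ℕ) = i+1
              · have : t = I1 := Fin.ext ht1
                rw [this, eI1]
              · rw [hLoff t ht0 ht1]; exact hc t ht0 ht1 ht2 ht3
        rw [eI0, eI1, eJ0, eJ1, if_pos c1, mul_one, if_congr hiff rfl rfl]
      · intro w _ hwne
        by_cases hd1 : ∀ t : Fin k, (t:ℕ) ≠ i → (t:ℕ) ≠ i+1 → v t = w t
        · by_cases hd2 : ∀ t : Fin k, (t:ℕ) ≠ j → (t:ℕ) ≠ j+1 → w t = u t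
          · exfalso
            apply hwne
            funext t
            by_cases ht0 : (t:ℕ) = i
            · have : t = I0 := Fin.ext ht0
              rw [this, eI0]; exact hd2 I0 (by simp [hI0]; omega) (by simp [hI0]; omega)
            · by_cases ht1 : (t:ℕ) = i+1
              · have : t = I1 := Fin.ext ht1
                rw [this, eI1]; exact hd2 I1 (by simp [hI1]; omega) (by simp [hI1]; omega)
              · rw [hLoff t ht0 ht1]; exact (hd1 t ht0 ht1).symm
          · rw [if_neg hd2]; simp
        · rw [if_neg hd1]; simp
      · intro hw; exact absurd (Finset.mem_univ wL) hw
    have hR : (∑ w : Fin k → Fin N,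
        (Y (v J0, v J1) (w J0, w J1) *
          (if ∀ t : Fin k, (t:ℕ) ≠ j → (t:ℕ) ≠ j+1 → v t = w t then (1:A) else 0)) *
        (X (w I0, w I1) (u I0, u I1) *
          (if ∀ t : Fin k, (t:ℕ) ≠ i → (t:ℕ) ≠ i+1 → w t = u t then (1:A) else 0)))
        = Y (v J0, v J1) (u J0, u J1) * (X (v I0, v I1) (u I0, u I1) *
          (if ∀ t : Fin k, (t:ℕ) ≠ i → (t:ℕ) ≠ i+1 → (t:ℕ) ≠ j → (t:ℕ) ≠ j+1 → v t = u t
            then (1:A) else 0)) := by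
      rw [Finset.sum_eq_single wR]
      · have c1 : ∀ t : Fin k, (t:ℕ) ≠ j → (t:ℕ) ≠ j+1 → v t = wR t :=
          fun t ht0 ht1 => (hRoff t ht0 ht1).symm
        have hiff : (∀ t : Fin k, (t:ℕ) ≠ i → (t:ℕ) ≠ i+1 → wR t = u t)
            ↔ (∀ t : Fin k, (t:ℕ) ≠ i → (t:ℕ) ≠ i+1 → (t:ℕ) ≠ j → (t:ℕ) ≠ j+1 → v t = u t) := by
          constructor
          · intro hc t ht0 ht1 ht2 ht3
            rw [← hRoff t ht2 ht3]; exact hc t ht0 ht1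
          · intro hc t ht0 ht1
            by_cases ht2 : (t:ℕ) = j
            · have : t = J0 := Fin.ext ht2
              rw [this, fJ0]
            · by_cases ht3 : (t:ℕ) = j+1
              · have : t = J1 := Fin.ext ht3
                rw [this, fJ1]
              · rw [hRoff t ht2 ht3]; exact hc t ht0 ht1 ht2 ht3
        rw [fJ0, fJ1, fI0, fI1, if_pos c1, mul_one, if_congr hiff rfl rfl]
      · intro w _ hwne
        by_cases hd1 : ∀ t : Fin k, (t:ℕ) ≠ j → (t:ℕ) ≠ j+1 → v t = w t
        · by_cases hd2 : ∀ t : Fin k, (t:ℕ) ≠ i → (t:ℕ) ≠ i+1 → w t = u t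
          · exfalso
            apply hwne
            funext t
            by_cases ht2 : (t:ℕ) = j
            · have : t = J0 := Fin.ext ht2
              rw [this, fJ0]; exact hd2 J0 (by simp [hJ0]; omega) (by simp [hJ0]; omega)
            · by_cases ht3 : (t:ℕ) = j+1
              · have : t = J1 := Fin.ext ht3
                rw [this, fJ1]; exact hd2 J1 (by simp [hJ1]; omega) (by simp [hJ1]; omega)
              · rw [hRoff t ht2 ht3]; exact (hd1 t ht2 ht3).symm
          · rw [if_neg hd2]; simp
        · rw [if_neg hd1]; simp
      · intro hw; exact absurd (Finset.mem_univ wR) hw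
    rw [hL, hR]
    rw [← mul_assoc, ← mul_assoc, (hcen _ _ _).symm.eq]
  · rw [lift2_of_ge' hjk, one_mul, mul_one]
end comm

section comm2
variable {N k : ℕ} {A : Type} [Ring A] {i q : ℕ}

lemma lift2_of_ge'' (h : ¬ i + 1 < k) (X : Matrix (Fin N × Fin N) (Fin N × Fin N) A) :
    lift2 k X i = 1 := by
  ext v w
  simp only [lift2, Matrix.of_apply, dif_neg h, Matrix.one_apply]

lemma liftV_lift2_comm (hqi : q < i)
    (Z : Matrix (Fin N) (Fin N) A) (Y : Matrix (Fin N × Fin N) (Fin N × Fin N) A)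
    (hcen : ∀ a b c, Commute (Y a b) c) :
    liftV k Z q * lift2 k Y i = lift2 k Y i * liftV k Z q := by
  by_cases hik : i + 1 < k
  · have hi0 : i < k := by omega
    have hq0 : q < k := by omega
    set Q : Fin k := ⟨q, hq0⟩ with hQ
    set J0 : Fin k := ⟨i, hi0⟩ with hJ0
    set J1 : Fin k := ⟨i+1, hik⟩ with hJ1
    ext v u
    rw [Matrix.mul_apply, Matrix.mul_apply]
    simp only [liftV, lift2, Matrix.of_apply, dif_pos hik, dif_pos hq0]
    set wL : Fin k → Fin N := fun t => if t = Q then u t else v t with hwL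
    set wR : Fin k → Fin N := fun t => if t = J0 ∨ t = J1 then u t else v t with hwR
    have eQ : wL Q = u Q := by rw [hwL]; exact if_pos rfl
    have eJ0 : wL J0 = v J0 := by
      rw [hwL]; exact if_neg (by simp [hQ, hJ0, Fin.ext_iff]; omega)
    have eJ1 : wL J1 = v J1 := by
      rw [hwL]; exact if_neg (by simp [hQ, hJ1, Fin.ext_iff]; omega)
    have fJ0 : wR J0 = u J0 := by rw [hwR]; exact if_pos (Or.inl rfl)
    have fJ1 : wR J1 = u J1 := by rw [hwR]; exact if_pos (Or.inr rfl)
    have fQ : wR Q = v Q := by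
      rw [hwR]; exact if_neg (by simp [hQ, hJ0, hJ1, Fin.ext_iff]; omega)
    have hLoff : ∀ t : Fin k, (t:ℕ) ≠ q → wL t = v t := by
      intro t ht0
      rw [hwL]; exact if_neg (by simp [hQ, Fin.ext_iff]; omega)
    have hRoff : ∀ t : Fin k, (t:ℕ) ≠ i → (t:ℕ) ≠ i+1 → wR t = v t := by
      intro t ht0 ht1
      rw [hwR]; exact if_neg (by simp [hJ0, hJ1, Fin.ext_iff]; omega)
    have hL : (∑ w : Fin k → Fin N,
        (Z (v Q) (w Q) * (if ∀ t : Fin k, (t:ℕ) ≠ q → v t = w t then (1:A) else 0)) *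
        (Y (w J0, w J1) (u J0, u J1) *
          (if ∀ t : Fin k, (t:ℕ) ≠ i → (t:ℕ) ≠ i+1 → w t = u t then (1:A) else 0)))
        = Z (v Q) (u Q) * (Y (v J0, v J1) (u J0, u J1) *
          (if ∀ t : Fin k, (t:ℕ) ≠ q → (t:ℕ) ≠ i → (t:ℕ) ≠ i+1 → v t = u t
            then (1:A) else 0)) := by
      rw [Finset.sum_eq_single wL]
      · have c1 : ∀ t : Fin k, (t:ℕ) ≠ q → v t = wL t := fun t ht => (hLoff t ht).symm
        have hiff : (∀ t : Fin k, (t:ℕ) ≠ i → (t:ℕ) ≠ i+1 → wL t = u t)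
            ↔ (∀ t : Fin k, (t:ℕ) ≠ q → (t:ℕ) ≠ i → (t:ℕ) ≠ i+1 → v t = u t) := by
          constructor
          · intro hc t ht0 ht1 ht2
            rw [← hLoff t ht0]; exact hc t ht1 ht2
          · intro hc t ht1 ht2
            by_cases ht0 : (t:ℕ) = q
            · have : t = Q := Fin.ext ht0
              rw [this, eQ]
            · rw [hLoff t ht0]; exact hc t ht0 ht1 ht2
        rw [eQ, eJ0, eJ1, if_pos c1, mul_one, if_congr hiff rfl rfl]
      · intro w _ hwne
        by_cases hd1 : ∀ t : Fin k, (t:ℕ) ≠ q → v t = w t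
        · by_cases hd2 : ∀ t : Fin k, (t:ℕ) ≠ i → (t:ℕ) ≠ i+1 → w t = u t
          · exfalso
            apply hwne
            funext t
            by_cases ht0 : (t:ℕ) = q
            · have : t = Q := Fin.ext ht0
              rw [this, eQ]; exact hd2 Q (by simp [hQ]; omega) (by simp [hQ]; omega)
            · rw [hLoff t ht0]; exact (hd1 t ht0).symm
          · rw [if_neg hd2]; simp
        · rw [if_neg hd1]; simp
      · intro hw; exact absurd (Finset.mem_univ wL) hw
    have hR : (∑ w : Fin k → Fin N,
        (Y (v J0, v J1) (w J0, w J1) *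
          (if ∀ t : Fin k, (t:ℕ) ≠ i → (t:ℕ) ≠ i+1 → v t = w t then (1:A) else 0)) *
        (Z (w Q) (u Q) * (if ∀ t : Fin k, (t:ℕ) ≠ q → w t = u t then (1:A) else 0)))
        = Y (v J0, v J1) (u J0, u J1) * (Z (v Q) (u Q) *
          (if ∀ t : Fin k, (t:ℕ) ≠ q → (t:ℕ) ≠ i → (t:ℕ) ≠ i+1 → v t = u t
            then (1:A) else 0)) := by
      rw [Finset.sum_eq_single wR]
      · have c1 : ∀ t : Fin k, (t:ℕ) ≠ i → (t:ℕ) ≠ i+1 → v t = wR t :=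
          fun t ht0 ht1 => (hRoff t ht0 ht1).symm
        have hiff : (∀ t : Fin k, (t:ℕ) ≠ q → wR t = u t)
            ↔ (∀ t : Fin k, (t:ℕ) ≠ q → (t:ℕ) ≠ i → (t:ℕ) ≠ i+1 → v t = u t) := by
          constructor
          · intro hc t ht0 ht1 ht2
            rw [← hRoff t ht1 ht2]; exact hc t ht0
          · intro hc t ht0
            by_cases ht1 : (t:ℕ) = i
            · have : t = J0 := Fin.ext ht1
              rw [this, fJ0]
            · by_cases ht2 : (t:ℕ) = i+1
              · have : t = J1 := Fin.ext ht2
                rw [this, fJ1]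
              · rw [hRoff t ht1 ht2]; exact hc t ht0 ht1 ht2
        rw [fJ0, fJ1, fQ, if_pos c1, mul_one, if_congr hiff rfl rfl]
      · intro w _ hwne
        by_cases hd1 : ∀ t : Fin k, (t:ℕ) ≠ i → (t:ℕ) ≠ i+1 → v t = w t
        · by_cases hd2 : ∀ t : Fin k, (t:ℕ) ≠ q → w t = u t
          · exfalso
            apply hwne
            funext t
            by_cases ht1 : (t:ℕ) = i
            · have : t = J0 := Fin.ext ht1
              rw [this, fJ0]; exact hd2 J0 (by simp [hJ0]; omega)
            · by_cases ht2 : (t:ℕ) = i+1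
              · have : t = J1 := Fin.ext ht2
                rw [this, fJ1]; exact hd2 J1 (by simp [hJ1]; omega)
              · rw [hRoff t ht1 ht2]; exact (hd1 t ht1 ht2).symm
          · rw [if_neg hd2]; simp
        · rw [if_neg hd1]; simp
      · intro hw; exact absurd (Finset.mem_univ wR) hw
    rw [hL, hR]
    rw [← mul_assoc, ← mul_assoc, (hcen _ _ _).symm.eq]
  · rw [lift2_of_ge'' hik, one_mul, mul_one]
end comm2

section alg
variable {N k : ℕ} {A : Type} [Ring A]

lemma smul_mul_mat {n : Type} [Fintype n] (a : A) (X Y : Matrix n n A) :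
    (a • X) * Y = a • (X * Y) := by
  ext i j
  simp [Matrix.mul_apply, Finset.mul_sum, mul_assoc]

lemma mul_smul_mat {n : Type} [Fintype n] (a : A) (ha : ∀ c, a * c = c * a)
    (X Y : Matrix n n A) : X * (a • Y) = a • (X * Y) := by
  ext i j
  simp only [Matrix.mul_apply, Matrix.smul_apply, smul_eq_mul, Finset.mul_sum]
  exact Finset.sum_congr rfl fun l _ => by rw [← mul_assoc, ← ha (X i l), mul_assoc]

lemma smul_smul_mat {n : Type} (a b : A) (X : Matrix n n A) :
    a • (b • X) = (a * b) • X := by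
  ext i j
  simp [Matrix.smul_apply, mul_assoc]

lemma conjInvSwap {Mo : Type*} [Monoid Mo] {g x x' xi xi' : Mo}
    (h : g * x = x' * g) (h1 : x * xi = 1) (h2 : xi' * x' = 1) :
    g * xi = xi' * g := by
  calc g * xi = (xi' * x') * (g * xi) := by rw [h2, one_mul]
    _ = xi' * ((x' * g) * xi) := by rw [mul_assoc, ← mul_assoc x' g xi]
    _ = xi' * ((g * x) * xi) := by rw [h]
    _ = xi' * (g * (x * xi)) := by rw [mul_assoc g x xi]
    _ = xi' * g := by rw [h1, mul_one]

def fseg (k : ℕ) (FA : Matrix (Fin N × Fin N) (Fin N × Fin N) A) :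
    ℕ → ℕ → Matrix (Fin k → Fin N) (Fin k → Fin N) A
  | _, 0 => 1
  | a, l + 1 => lift2 k FA a * fseg k FA (a + 1) l

def fseginv (k : ℕ) (FinvA : Matrix (Fin N × Fin N) (Fin N × Fin N) A) :
    ℕ → ℕ → Matrix (Fin k → Fin N) (Fin k → Fin N) A
  | _, 0 => 1
  | a, l + 1 => fseginv k FinvA (a + 1) l * lift2 k FinvA a

variable {FA FinvA : Matrix (Fin N × Fin N) (Fin N × Fin N) A}

lemma fseg_mul_inv (hFF : ∀ m, lift2 k FA m * lift2 k FinvA m = 1) :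
    ∀ (l a : ℕ), fseg k FA a l * fseginv k FinvA a l = 1 := by
  intro l
  induction l with
  | zero => intro a; simp [fseg, fseginv]
  | succ l ih =>
    intro a
    show (lift2 k FA a * fseg k FA (a+1) l) * (fseginv k FinvA (a+1) l * lift2 k FinvA a) = 1
    rw [mul_assoc, ← mul_assoc (fseg k FA (a+1) l), ih (a+1), one_mul, hFF a]

lemma fseg_comm_lift2_low {m : ℕ} (hcenF : ∀ a b c, Commute (FA a b) c)
    (Y : Matrix (Fin N × Fin N) (Fin N × Fin N) A) :
    ∀ (l a : ℕ), m + 1 < a →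
    lift2 k Y m * fseg k FA a l = fseg k FA a l * lift2 k Y m := by
  intro l
  induction l with
  | zero => intro a _; simp [fseg]
  | succ l ih =>
    intro a h
    show lift2 k Y m * (lift2 k FA a * fseg k FA (a+1) l)
      = (lift2 k FA a * fseg k FA (a+1) l) * lift2 k Y m
    rw [← mul_assoc, lift2_comm h Y FA hcenF, mul_assoc, ih (a+1) (by omega), ← mul_assoc]

lemma fseg_comm_lift2_high {j : ℕ} (Y : Matrix (Fin N × Fin N) (Fin N × Fin N) A)
    (hcenY : ∀ a b c, Commute (Y a b) c) :
    ∀ (l a : ℕ), a + l < j →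
    fseg k FA a l * lift2 k Y j = lift2 k Y j * fseg k FA a l := by
  intro l
  induction l with
  | zero => intro a _; simp [fseg]
  | succ l ih =>
    intro a h
    show (lift2 k FA a * fseg k FA (a+1) l) * lift2 k Y j
      = lift2 k Y j * (lift2 k FA a * fseg k FA (a+1) l)
    rw [mul_assoc, ih (a+1) (by omega), ← mul_assoc,
      lift2_comm (by omega : a + 1 < j) FA Y hcenY, mul_assoc]

lemma fseg_comm_liftV {q : ℕ} (hcenF : ∀ a b c, Commute (FA a b) c)
    (Z : Matrix (Fin N) (Fin N) A) :
    ∀ (l a : ℕ), q < a →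
    fseg k FA a l * liftV k Z q = liftV k Z q * fseg k FA a l := by
  intro l
  induction l with
  | zero => intro a _; simp [fseg]
  | succ l ih =>
    intro a h
    show (lift2 k FA a * fseg k FA (a+1) l) * liftV k Z q
      = liftV k Z q * (lift2 k FA a * fseg k FA (a+1) l)
    rw [mul_assoc, ih (a+1) (by omega), ← mul_assoc,
      ← liftV_lift2_comm h Z FA hcenF, mul_assoc]

lemma fseg_split : ∀ (l1 l2 a : ℕ),
    fseg k FA a (l1 + l2) = fseg k FA a l1 * fseg k FA (a + l1) l2 := by
  intro l1
  induction l1 with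
  | zero => intro l2 a; simp [fseg, Nat.zero_add]
  | succ l1 ih =>
    intro l2 a
    have e : l1 + 1 + l2 = (l1 + l2) + 1 := by omega
    rw [e]
    show lift2 k FA a * fseg k FA (a+1) (l1 + l2) = _
    rw [ih l2 (a+1)]
    have e2 : a + 1 + l1 = a + (l1 + 1) := by omega
    rw [e2, ← mul_assoc]
    rfl
end alg

section alg2
variable {N k : ℕ} {A : Type} [Ring A]
variable {FA FinvA RA RinvA : Matrix (Fin N × Fin N) (Fin N × Fin N) A}

lemma gprod_swap (hcenF : ∀ a b c, Commute (FA a b) c)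
    {X X' : Matrix (Fin N × Fin N) (Fin N × Fin N) A}
    (hcenX' : ∀ a b c, Commute (X' a b) c)
    (hrel : ∀ m, m + 2 < k → lift2 k FA m * lift2 k FA (m+1) * lift2 k X m
      = lift2 k X' (m+1) * lift2 k FA m * lift2 k FA (m+1))
    {m t : ℕ} (hm : m + 1 ≤ t) (hk : t + 2 ≤ k) :
    fseg k FA 0 (t+1) * lift2 k X m = lift2 k X' (m+1) * fseg k FA 0 (t+1) := by
  have hr : m + 2 < k := by omega
  set r : ℕ := t - m - 1 with hrdef
  have e : t + 1 = m + (r + 2) := by omega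
  have hsplit : fseg k FA 0 (t+1)
      = fseg k FA 0 m * (lift2 k FA m * (lift2 k FA (m+1) * fseg k FA (m+2) r)) := by
    rw [e, fseg_split m (r+2) 0]
    have : (0 : ℕ) + m = m := by omega
    rw [this]
    show _ = fseg k FA 0 m * (lift2 k FA m * fseg k FA (m+1) (r+1))
    rfl
  have hrel' : lift2 k FA m * (lift2 k FA (m+1) * lift2 k X m)
      = lift2 k X' (m+1) * (lift2 k FA m * lift2 k FA (m+1)) := by
    rw [← mul_assoc, hrel m hr, mul_assoc]
  rw [hsplit]
  calc fseg k FA 0 m * (lift2 k FA m * (lift2 k FA (m+1) * fseg k FA (m+2) r)) * lift2 k X m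
      = fseg k FA 0 m * (lift2 k FA m * (lift2 k FA (m+1) * (fseg k FA (m+2) r * lift2 k X m))) := by
        simp only [mul_assoc]
    _ = fseg k FA 0 m * (lift2 k FA m * (lift2 k FA (m+1) * (lift2 k X m * fseg k FA (m+2) r))) := by
        rw [← fseg_comm_lift2_low hcenF X r (m+2) (by omega)]
    _ = fseg k FA 0 m * ((lift2 k FA m * (lift2 k FA (m+1) * lift2 k X m)) * fseg k FA (m+2) r) := by
        simp only [mul_assoc]
    _ = fseg k FA 0 m * ((lift2 k X' (m+1) * (lift2 k FA m * lift2 k FA (m+1))) * fseg k FA (m+2) r) := by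
        rw [hrel']
    _ = (fseg k FA 0 m * lift2 k X' (m+1)) * ((lift2 k FA m * lift2 k FA (m+1)) * fseg k FA (m+2) r) := by
        simp only [mul_assoc]
    _ = (lift2 k X' (m+1) * fseg k FA 0 m) * ((lift2 k FA m * lift2 k FA (m+1)) * fseg k FA (m+2) r) := by
        rw [fseg_comm_lift2_high X' hcenX' m 0 (by omega)]
    _ = lift2 k X' (m+1) * (fseg k FA 0 m * (lift2 k FA m * (lift2 k FA (m+1) * fseg k FA (m+2) r))) := by
        simp only [mul_assoc]

lemma gprod_copies (hcenF : ∀ a b c, Commute (FA a b) c)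
    (hFF : ∀ m, lift2 k FA m * lift2 k FinvA m = 1)
    (hFiF : ∀ m, lift2 k FinvA m * lift2 k FA m = 1)
    (hybf : ∀ m, m + 2 < k → lift2 k FA m * lift2 k FA (m+1) * lift2 k FA m
      = lift2 k FA (m+1) * lift2 k FA m * lift2 k FA (m+1))
    (X : Matrix (Fin N) (Fin N) A) :
    ∀ (m t : ℕ), m ≤ t → t + 2 ≤ k →
    fseg k FA 0 (t+1) * copies k FA FinvA X m = copies k FA FinvA X (m+1) * fseg k FA 0 (t+1) := by
  intro m
  induction m with
  | zero =>
    intro t _ hk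
    show (lift2 k FA 0 * fseg k FA 1 t) * liftV k X 0
      = (lift2 k FA 0 * liftV k X 0 * lift2 k FinvA 0) * (lift2 k FA 0 * fseg k FA 1 t)
    calc (lift2 k FA 0 * fseg k FA 1 t) * liftV k X 0
        = lift2 k FA 0 * (liftV k X 0 * fseg k FA 1 t) := by
          rw [mul_assoc, fseg_comm_liftV hcenF X t 1 (by omega)]
      _ = (lift2 k FA 0 * liftV k X 0) * ((lift2 k FinvA 0 * lift2 k FA 0) * fseg k FA 1 t) := by
          rw [hFiF 0, one_mul, mul_assoc]
      _ = (lift2 k FA 0 * liftV k X 0 * lift2 k FinvA 0) * (lift2 k FA 0 * fseg k FA 1 t) := by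
          rw [mul_assoc (lift2 k FA 0 * liftV k X 0), ← mul_assoc (lift2 k FinvA 0), ← mul_assoc]
  | succ m ih =>
    intro t hm hk
    have hswapF : fseg k FA 0 (t+1) * lift2 k FA m = lift2 k FA (m+1) * fseg k FA 0 (t+1) :=
      gprod_swap hcenF hcenF hybf hm hk
    have hswapFi : fseg k FA 0 (t+1) * lift2 k FinvA m
        = lift2 k FinvA (m+1) * fseg k FA 0 (t+1) :=
      conjInvSwap hswapF (hFF m) (hFiF (m+1))
    show fseg k FA 0 (t+1) * (lift2 k FA m * copies k FA FinvA X m * lift2 k FinvA m)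
      = (lift2 k FA (m+1) * copies k FA FinvA X (m+1) * lift2 k FinvA (m+1)) * fseg k FA 0 (t+1)
    calc fseg k FA 0 (t+1) * (lift2 k FA m * copies k FA FinvA X m * lift2 k FinvA m)
        = (fseg k FA 0 (t+1) * lift2 k FA m) * copies k FA FinvA X m * lift2 k FinvA m := by
          rw [← mul_assoc, ← mul_assoc]
      _ = lift2 k FA (m+1) * (fseg k FA 0 (t+1) * copies k FA FinvA X m) * lift2 k FinvA m := by
          rw [hswapF, mul_assoc (lift2 k FA (m+1))]
      _ = lift2 k FA (m+1) * (copies k FA FinvA X (m+1) * fseg k FA 0 (t+1)) * lift2 k FinvA m := by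
          rw [ih t (by omega) hk]
      _ = lift2 k FA (m+1) * copies k FA FinvA X (m+1) * (fseg k FA 0 (t+1) * lift2 k FinvA m) := by
          rw [← mul_assoc, mul_assoc (lift2 k FA (m+1) * copies k FA FinvA X (m+1))]
      _ = lift2 k FA (m+1) * copies k FA FinvA X (m+1) * (lift2 k FinvA (m+1) * fseg k FA 0 (t+1)) := by
          rw [hswapFi]
      _ = (lift2 k FA (m+1) * copies k FA FinvA X (m+1) * lift2 k FinvA (m+1)) * fseg k FA 0 (t+1) := by
          rw [← mul_assoc]

lemma copies_comm {Y : Matrix (Fin N × Fin N) (Fin N × Fin N) A}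
    (hcenY : ∀ a b c, Commute (Y a b) c) (X : Matrix (Fin N) (Fin N) A) :
    ∀ (n m : ℕ), n < m →
    copies k FA FinvA X n * lift2 k Y m = lift2 k Y m * copies k FA FinvA X n := by
  intro n
  induction n with
  | zero => intro m hm; exact liftV_lift2_comm hm X Y hcenY
  | succ n ih =>
    intro m hm
    show (lift2 k FA n * copies k FA FinvA X n * lift2 k FinvA n) * lift2 k Y m
      = lift2 k Y m * (lift2 k FA n * copies k FA FinvA X n * lift2 k FinvA n)
    calc (lift2 k FA n * copies k FA FinvA X n * lift2 k FinvA n) * lift2 k Y m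
        = lift2 k FA n * copies k FA FinvA X n * (lift2 k FinvA n * lift2 k Y m) := by
          rw [mul_assoc (lift2 k FA n * copies k FA FinvA X n)]
      _ = lift2 k FA n * (copies k FA FinvA X n * lift2 k Y m) * lift2 k FinvA n := by
          rw [lift2_comm (by omega) FinvA Y hcenY, ← mul_assoc, mul_assoc (lift2 k FA n)]
      _ = (lift2 k FA n * lift2 k Y m) * copies k FA FinvA X n * lift2 k FinvA n := by
          rw [ih m (by omega), ← mul_assoc]
      _ = lift2 k Y m * (lift2 k FA n * copies k FA FinvA X n * lift2 k FinvA n) := by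
          rw [lift2_comm (by omega) FA Y hcenY]
          simp only [mul_assoc]

lemma copiesProd_comm {Y : Matrix (Fin N × Fin N) (Fin N × Fin N) A}
    (hcenY : ∀ a b c, Commute (Y a b) c) (X : Matrix (Fin N) (Fin N) A) :
    ∀ (n m : ℕ), n < m →
    copiesProd k FA FinvA X n * lift2 k Y m = lift2 k Y m * copiesProd k FA FinvA X n := by
  intro n
  induction n with
  | zero => intro m hm; exact copies_comm hcenY X 0 m hm
  | succ n ih =>
    intro m hm
    show (copiesProd k FA FinvA X n * copies k FA FinvA X (n+1)) * lift2 k Y m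
      = lift2 k Y m * (copiesProd k FA FinvA X n * copies k FA FinvA X (n+1))
    rw [mul_assoc, copies_comm hcenY X (n+1) m hm, ← mul_assoc, ih m (by omega), mul_assoc]
end alg2

section alg3
variable {N k : ℕ} {A : Type} [Ring A]
variable {FA FinvA RA RinvA : Matrix (Fin N × Fin N) (Fin N × Fin N) A}

lemma Cchain
    (hcenF : ∀ a b c, Commute (FA a b) c)
    (hcenR : ∀ a b c, Commute (RA a b) c)
    (hFF : ∀ m, lift2 k FA m * lift2 k FinvA m = 1)
    (hFiF : ∀ m, lift2 k FinvA m * lift2 k FA m = 1)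
    (hRR : ∀ m, lift2 k RA m * lift2 k RinvA m = 1)
    (hRiR : ∀ m, lift2 k RinvA m * lift2 k RA m = 1)
    (hybf : ∀ m, m + 2 < k → lift2 k FA m * lift2 k FA (m+1) * lift2 k FA m
      = lift2 k FA (m+1) * lift2 k FA m * lift2 k FA (m+1))
    (hcomp2 : ∀ m, m + 2 < k → lift2 k FA m * lift2 k FA (m+1) * lift2 k RA m
      = lift2 k RA (m+1) * lift2 k FA m * lift2 k FA (m+1))
    (L M : Matrix (Fin N) (Fin N) A) (η' : A) (hη' : ∀ c, η' * c = c * η')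
    (hC0 : copies k FA FinvA L 0 * lift2 k RA 0 * copies k FA FinvA M 0
      = η' • (lift2 k RinvA 0 * copies k FA FinvA M 0 * copies k FA FinvA L 1)) :
    ∀ j, j + 1 < k → copies k FA FinvA L j * lift2 k RA j * copies k FA FinvA M j
      = η' • (lift2 k RinvA j * copies k FA FinvA M j * copies k FA FinvA L (j+1)) := by
  intro j
  induction j with
  | zero => intro _; exact hC0
  | succ j ih =>
    intro hk
    have hkk : (j + 1) + 2 ≤ k := by omega
    set G := fseg k FA 0 (j+2) with hG
    have hGL : G * copies k FA FinvA L j = copies k FA FinvA L (j+1) * G :=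
      gprod_copies hcenF hFF hFiF hybf L j (j+1) (by omega) hkk
    have hGL1 : G * copies k FA FinvA L (j+1) = copies k FA FinvA L (j+2) * G :=
      gprod_copies hcenF hFF hFiF hybf L (j+1) (j+1) le_rfl hkk
    have hGM : G * copies k FA FinvA M j = copies k FA FinvA M (j+1) * G :=
      gprod_copies hcenF hFF hFiF hybf M j (j+1) (by omega) hkk
    have hGR : G * lift2 k RA j = lift2 k RA (j+1) * G :=
      gprod_swap hcenF hcenR hcomp2 (le_refl (j+1)) hkk
    have hGRi : G * lift2 k RinvA j = lift2 k RinvA (j+1) * G :=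
      conjInvSwap hGR (hRR j) (hRiR (j+1))
    have hGi : G * fseginv k FinvA 0 (j+2) = 1 := fseg_mul_inv hFF (j+2) 0
    have cancel : ∀ (P Q : Matrix (Fin k → Fin N) (Fin k → Fin N) A),
        P * G = Q * G → P = Q := by
      intro P Q hPQ
      have h2 := congrArg (fun Z => Z * fseginv k FinvA 0 (j+2)) hPQ
      simpa only [mul_assoc, hGi, mul_one] using h2
    apply cancel
    calc (copies k FA FinvA L (j+1) * lift2 k RA (j+1) * copies k FA FinvA M (j+1)) * G
        = copies k FA FinvA L (j+1) * (lift2 k RA (j+1) * (copies k FA FinvA M (j+1) * G)) := by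
          simp only [mul_assoc]
      _ = copies k FA FinvA L (j+1) * ((lift2 k RA (j+1) * G) * copies k FA FinvA M j) := by
          rw [← hGM]; simp only [mul_assoc]
      _ = (copies k FA FinvA L (j+1) * G) * (lift2 k RA j * copies k FA FinvA M j) := by
          rw [← hGR]; simp only [mul_assoc]
      _ = G * (copies k FA FinvA L j * lift2 k RA j * copies k FA FinvA M j) := by
          rw [← hGL]; simp only [mul_assoc]
      _ = G * (η' • (lift2 k RinvA j * copies k FA FinvA M j * copies k FA FinvA L (j+1))) := by
          rw [ih (by omega)]
      _ = η' • (G * (lift2 k RinvA j * (copies k FA FinvA M j * copies k FA FinvA L (j+1)))) := by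
          rw [mul_smul_mat η' hη']; simp only [mul_assoc]
      _ = η' • ((lift2 k RinvA (j+1) * G) * (copies k FA FinvA M j * copies k FA FinvA L (j+1))) := by
          rw [← mul_assoc, hGRi]
      _ = η' • (lift2 k RinvA (j+1) * ((G * copies k FA FinvA M j) * copies k FA FinvA L (j+1))) := by
          simp only [mul_assoc]
      _ = η' • (lift2 k RinvA (j+1) * (copies k FA FinvA M (j+1) * (G * copies k FA FinvA L (j+1)))) := by
          rw [hGM]; simp only [mul_assoc]
      _ = η' • (lift2 k RinvA (j+1) * (copies k FA FinvA M (j+1) * (copies k FA FinvA L (j+2) * G))) := by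
          rw [hGL1]
      _ = (η' • (lift2 k RinvA (j+1) * copies k FA FinvA M (j+1) * copies k FA FinvA L (j+2))) * G := by
          rw [smul_mul_mat]; simp only [mul_assoc]

lemma Sall
    (hcenF : ∀ a b c, Commute (FA a b) c)
    (hcenR : ∀ a b c, Commute (RA a b) c)
    (hcenRi : ∀ a b c, Commute (RinvA a b) c)
    (hFF : ∀ m, lift2 k FA m * lift2 k FinvA m = 1)
    (hFiF : ∀ m, lift2 k FinvA m * lift2 k FA m = 1)
    (hRR : ∀ m, lift2 k RA m * lift2 k RinvA m = 1)
    (hRiR : ∀ m, lift2 k RinvA m * lift2 k RA m = 1)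
    (hybf : ∀ m, m + 2 < k → lift2 k FA m * lift2 k FA (m+1) * lift2 k FA m
      = lift2 k FA (m+1) * lift2 k FA m * lift2 k FA (m+1))
    (hcomp2 : ∀ m, m + 2 < k → lift2 k FA m * lift2 k FA (m+1) * lift2 k RA m
      = lift2 k RA (m+1) * lift2 k FA m * lift2 k FA (m+1))
    (L M : Matrix (Fin N) (Fin N) A) (η' : A) (hη' : ∀ c, η' * c = c * η')
    (hC0 : copies k FA FinvA L 0 * lift2 k RA 0 * copies k FA FinvA M 0
      = η' • (lift2 k RinvA 0 * copies k FA FinvA M 0 * copies k FA FinvA L 1)) :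
    ∀ q, q + 1 < k →
    liftV k L 0 * RupProd k RA q * copiesProd k FA FinvA M q
      = η' ^ (q+1) • (RupProd k RinvA q * copiesProd k FA FinvA M q
          * copies k FA FinvA L (q+1)) := by
  have hC := Cchain hcenF hcenR hFF hFiF hRR hRiR hybf hcomp2 L M η' hη' hC0
  intro q
  induction q with
  | zero =>
    intro h1
    rw [pow_one]
    exact hC 0 h1
  | succ q ih =>
    intro hk
    have hC1 := hC (q+1) hk
    show liftV k L 0 * (RupProd k RA q * lift2 k RA (q+1))
        * (copiesProd k FA FinvA M q * copies k FA FinvA M (q+1))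
      = η' ^ (q+2) • ((RupProd k RinvA q * lift2 k RinvA (q+1))
          * (copiesProd k FA FinvA M q * copies k FA FinvA M (q+1))
          * copies k FA FinvA L (q+2))
    calc liftV k L 0 * (RupProd k RA q * lift2 k RA (q+1))
        * (copiesProd k FA FinvA M q * copies k FA FinvA M (q+1))
        = liftV k L 0 * (RupProd k RA q
            * ((lift2 k RA (q+1) * copiesProd k FA FinvA M q) * copies k FA FinvA M (q+1))) := by
          simp only [mul_assoc]
      _ = liftV k L 0 * (RupProd k RA q
            * ((copiesProd k FA FinvA M q * lift2 k RA (q+1)) * copies k FA FinvA M (q+1))) := by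
          rw [← copiesProd_comm hcenR M q (q+1) (by omega)]
      _ = (liftV k L 0 * RupProd k RA q * copiesProd k FA FinvA M q)
            * (lift2 k RA (q+1) * copies k FA FinvA M (q+1)) := by
          simp only [mul_assoc]
      _ = (η' ^ (q+1) • (RupProd k RinvA q * copiesProd k FA FinvA M q
            * copies k FA FinvA L (q+1))) * (lift2 k RA (q+1) * copies k FA FinvA M (q+1)) := by
          rw [ih (by omega)]
      _ = η' ^ (q+1) • ((RupProd k RinvA q * copiesProd k FA FinvA M q)
            * (copies k FA FinvA L (q+1) * lift2 k RA (q+1) * copies k FA FinvA M (q+1))) := by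
          rw [smul_mul_mat]; simp only [mul_assoc]
      _ = η' ^ (q+1) • ((RupProd k RinvA q * copiesProd k FA FinvA M q)
            * (η' • (lift2 k RinvA (q+1) * copies k FA FinvA M (q+1)
                * copies k FA FinvA L (q+2)))) := by
          rw [hC1]
      _ = (η' ^ (q+1) * η') • ((RupProd k RinvA q * copiesProd k FA FinvA M q)
            * (lift2 k RinvA (q+1) * copies k FA FinvA M (q+1)
                * copies k FA FinvA L (q+2))) := by
          rw [mul_smul_mat η' hη', smul_smul_mat]
      _ = η' ^ (q+2) • (RupProd k RinvA q
            * ((copiesProd k FA FinvA M q * lift2 k RinvA (q+1))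
              * (copies k FA FinvA M (q+1) * copies k FA FinvA L (q+2)))) := by
          rw [← pow_succ]; simp only [mul_assoc]
      _ = η' ^ (q+2) • (RupProd k RinvA q
            * ((lift2 k RinvA (q+1) * copiesProd k FA FinvA M q)
              * (copies k FA FinvA M (q+1) * copies k FA FinvA L (q+2)))) := by
          rw [copiesProd_comm hcenRi M q (q+1) (by omega)]
      _ = η' ^ (q+2) • ((RupProd k RinvA q * lift2 k RinvA (q+1))
            * (copiesProd k FA FinvA M q * copies k FA FinvA M (q+1))
            * copies k FA FinvA L (q+2)) := by
          simp only [mul_assoc]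
end alg3

section glue
variable {N : ℕ} {A : Type} [Ring A] [Algebra ℂ A]

lemma map_u12 (φ : ℂ →+* A) (X : Matrix (Fin N × Fin N) (Fin N × Fin N) ℂ) :
    (up12 X).map φ = u12A (X.map φ) := by
  ext pq₁ pq₂
  simp [up12, u12A, Matrix.map_apply, apply_ite φ, _root_.map_mul]

lemma map_u23 (φ : ℂ →+* A) (X : Matrix (Fin N × Fin N) (Fin N × Fin N) ℂ) :
    (up23 X).map φ = u23A (X.map φ) := by
  ext pq₁ pq₂
  simp [up23, u23A, Matrix.map_apply, apply_ite φ, _root_.map_mul]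
end glue

/-- For the braided differential algebra over a quantum matrix algebra, the
action relation iterates to all homogeneous components:
`L₁ R_{1→p} M_{1̄}⋯M_{p̄} = η^p R⁻¹_{1→p} M_{1̄}⋯M_{p̄} L_{p+1‾}`
in `Mat_{N^{p+1}}(A)`. -/
theorem bd_algebra_action_iterated (N : ℕ) (hN : 1 ≤ N)
    (R Rinv F Finv : Matrix (Fin N × Fin N) (Fin N × Fin N) ℂ)
    (hYBR : up12 R * up23 R * up12 R = up23 R * up12 R * up23 R)
    (hYBF : up12 F * up23 F * up12 F = up23 F * up12 F * up23 F)
    (hRinv : R * Rinv = 1 ∧ Rinv * R = 1)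
    (hFinv : F * Finv = 1 ∧ Finv * F = 1)
    (hcomp : up12 R * up23 F * up12 F = up23 F * up12 F * up23 R
      ∧ up12 F * up23 F * up12 R = up23 R * up12 F * up23 F)
    (A : Type) [Ring A] [Algebra ℂ A] (η : ℂ) (hη : η ≠ 0)
    (L M : Matrix (Fin N) (Fin N) A)
    (hQM : R.map (algebraMap ℂ A) * lift1 M
          * (F.map (algebraMap ℂ A) * lift1 M * Finv.map (algebraMap ℂ A))
        = lift1 M * (F.map (algebraMap ℂ A) * lift1 M * Finv.map (algebraMap ℂ A))
          * R.map (algebraMap ℂ A))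
    (hRE : R.map (algebraMap ℂ A) * lift1 L * R.map (algebraMap ℂ A) * lift1 L
        = lift1 L * R.map (algebraMap ℂ A) * lift1 L * R.map (algebraMap ℂ A))
    (hOFP : R.map (algebraMap ℂ A) * lift1 L * R.map (algebraMap ℂ A) * lift1 M
        = algebraMap ℂ A η
            • (lift1 M * (F.map (algebraMap ℂ A) * lift1 L * Finv.map (algebraMap ℂ A)))) :
    ∀ p : ℕ, 1 ≤ p →
      liftV (p + 1) L 0 * RupProd (p + 1) (R.map (algebraMap ℂ A)) (p - 1)
          * copiesProd (p + 1) (F.map (algebraMap ℂ A)) (Finv.map (algebraMap ℂ A)) M (p - 1)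
        = algebraMap ℂ A (η ^ p)
            • (RupProd (p + 1) (Rinv.map (algebraMap ℂ A)) (p - 1)
              * copiesProd (p + 1) (F.map (algebraMap ℂ A)) (Finv.map (algebraMap ℂ A)) M (p - 1)
              * copies (p + 1) (F.map (algebraMap ℂ A)) (Finv.map (algebraMap ℂ A)) L p) := by
  intro p hp
  let φ : ℂ →+* A := algebraMap ℂ A
  set FA : Matrix (Fin N × Fin N) (Fin N × Fin N) A := F.map (algebraMap ℂ A) with hFA
  set FinvA : Matrix (Fin N × Fin N) (Fin N × Fin N) A := Finv.map (algebraMap ℂ A) with hFinvA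
  set RA : Matrix (Fin N × Fin N) (Fin N × Fin N) A := R.map (algebraMap ℂ A) with hRA
  set RinvA : Matrix (Fin N × Fin N) (Fin N × Fin N) A := Rinv.map (algebraMap ℂ A) with hRinvA
  set η' : A := algebraMap ℂ A η with hη'
  set k : ℕ := p + 1 with hkdef
  have hacen : ∀ c : A, η' * c = c * η' := fun c => Algebra.commutes η c
  have hcenF : ∀ a b c, Commute (FA a b) c := fun a b c => by
    rw [hFA, Matrix.map_apply]; exact Algebra.commutes _ _
  have hcenR : ∀ a b c, Commute (RA a b) c := fun a b c => by
    rw [hRA, Matrix.map_apply]; exact Algebra.commutes _ _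
  have hcenRi : ∀ a b c, Commute (RinvA a b) c := fun a b c => by
    rw [hRinvA, Matrix.map_apply]; exact Algebra.commutes _ _
  have hmapone : ∀ (X Y : Matrix (Fin N × Fin N) (Fin N × Fin N) ℂ), X * Y = 1 →
      X.map (algebraMap ℂ A) * Y.map (algebraMap ℂ A) = 1 := by
    intro X Y hXY
    rw [← Matrix.map_mul, hXY, Matrix.map_one _ (map_zero _) (map_one _)]
  have hFF : ∀ m, lift2 k FA m * lift2 k FinvA m = 1 := by
    intro m
    by_cases h : m + 1 < k
    · rw [lift2_mul h, hFA, hFinvA, hmapone F Finv hFinv.1, lift2_one]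
    · rw [lift2_of_ge h, one_mul, lift2_of_ge h]
  have hFiF : ∀ m, lift2 k FinvA m * lift2 k FA m = 1 := by
    intro m
    by_cases h : m + 1 < k
    · rw [lift2_mul h, hFA, hFinvA, hmapone Finv F hFinv.2, lift2_one]
    · rw [lift2_of_ge h, one_mul, lift2_of_ge h]
  have hRR : ∀ m, lift2 k RA m * lift2 k RinvA m = 1 := by
    intro m
    by_cases h : m + 1 < k
    · rw [lift2_mul h, hRA, hRinvA, hmapone R Rinv hRinv.1, lift2_one]
    · rw [lift2_of_ge h, one_mul, lift2_of_ge h]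
  have hRiR : ∀ m, lift2 k RinvA m * lift2 k RA m = 1 := by
    intro m
    by_cases h : m + 1 < k
    · rw [lift2_mul h, hRA, hRinvA, hmapone Rinv R hRinv.2, lift2_one]
    · rw [lift2_of_ge h, one_mul, lift2_of_ge h]
  have hybfA : u12A FA * u23A FA * u12A FA = u23A FA * u12A FA * u23A FA := by
    have h1 := congrArg (fun Z => Z.map (algebraMap ℂ A)) hYBF
    simpa only [Matrix.map_mul, map_u12, map_u23, hFA] using h1
  have hcomp2A : u12A FA * u23A FA * u12A RA = u23A RA * u12A FA * u23A FA := by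
    have h1 := congrArg (fun Z => Z.map (algebraMap ℂ A)) hcomp.2
    simpa only [Matrix.map_mul, map_u12, map_u23, hFA, hRA] using h1
  have hybf : ∀ m, m + 2 < k → lift2 k FA m * lift2 k FA (m+1) * lift2 k FA m
      = lift2 k FA (m+1) * lift2 k FA m * lift2 k FA (m+1) := by
    intro m hm
    have h3 := congrArg (fun Z => lift3 k Z m) hybfA
    simp only [← lift3_mul hm, lift3_u12 hm, lift3_u23 hm] at h3
    exact h3
  have hcomp2 : ∀ m, m + 2 < k → lift2 k FA m * lift2 k FA (m+1) * lift2 k RA m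
      = lift2 k RA (m+1) * lift2 k FA m * lift2 k FA (m+1) := by
    intro m hm
    have h3 := congrArg (fun Z => lift3 k Z m) hcomp2A
    simp only [← lift3_mul hm, lift3_u12 hm, lift3_u23 hm] at h3
    exact h3
  -- the base relation in the small space
  have hsmallRiR : RinvA * RA = 1 := hmapone Rinv R hRinv.2
  have E : lift1 L * RA * lift1 M
      = η' • (RinvA * (lift1 M * (FA * lift1 L * FinvA))) := by
    calc lift1 L * RA * lift1 M
        = (RinvA * RA) * (lift1 L * RA * lift1 M) := by rw [hsmallRiR, one_mul]
      _ = RinvA * (RA * lift1 L * RA * lift1 M) := by simp only [mul_assoc]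
      _ = RinvA * (η' • (lift1 M * (FA * lift1 L * FinvA))) := by
          rw [hOFP]
      _ = η' • (RinvA * (lift1 M * (FA * lift1 L * FinvA))) := by
          rw [mul_smul_mat η' hacen]
  have hk2 : (0:ℕ) + 1 < k := by omega
  have C0 : copies k FA FinvA L 0 * lift2 k RA 0 * copies k FA FinvA M 0
      = η' • (lift2 k RinvA 0 * copies k FA FinvA M 0 * copies k FA FinvA L 1) := by
    have hL := congrArg (fun Z => lift2 k Z 0) E
    rw [← lift2_mul hk2, ← lift2_mul hk2, lift2_smul hk2,
      ← lift2_mul hk2, ← lift2_mul hk2, ← lift2_mul hk2, ← lift2_mul hk2,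
      lift2_lift1 hk2, lift2_lift1 hk2] at hL
    show liftV k L 0 * lift2 k RA 0 * liftV k M 0
      = η' • (lift2 k RinvA 0 * liftV k M 0
          * (lift2 k FA 0 * liftV k L 0 * lift2 k FinvA 0))
    rw [hL]
    congr 1
    simp only [mul_assoc]
  have final := Sall hcenF hcenR hcenRi hFF hFiF hRR hRiR hybf hcomp2 L M η' hacen C0
    (p - 1) (by omega)
  have hq : p - 1 + 1 = p := by omega
  rw [hq] at final
  rw [map_pow]
  exact final
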